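/- Let d ≥ 1, p > 1, and let f : ℝ^d → ℝ be a nonnegative function with ∇f ∈ L²(ℝ^d), f^{p+1} ∈ L¹(ℝ^d) and |x|² f^{2p} ∈ L¹(ℝ^d). Then (d/(p+1))² (∫_{ℝ^d} f^{p+1} dx)² ≤ (∫_{ℝ^d} |∇f|² dx)(∫_{ℝ^d} |x|² f^{2p} dx). -/

import Mathlib

open MeasureTheory Real

section NonlinearHeisenbergAux

open Filter Set

private lemma aux_limit_zero {h : ℝ → ℝ} (hpos : ∀ t, 0 ≤ h t) (hint : Integrable h)
    {m : ℝ} (hm : Tendsto (fun t => t * h t) atTop (nhds m)) : m = 0 := by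
  by_contra hm0
  have hmnn : 0 ≤ m := by
    refine ge_of_tendsto hm ?_
    filter_upwards [eventually_ge_atTop (0:ℝ)] with t ht
    exact mul_nonneg ht (hpos t)
  have hmpos : 0 < m := lt_of_le_of_ne hmnn (Ne.symm hm0)
  have hev : ∀ᶠ t in atTop, m / 2 < t * h t :=
    hm.eventually (eventually_gt_nhds (half_lt_self hmpos))
  obtain ⟨T₀, hT₀⟩ := hev.exists_forall_of_atTop
  set T := max T₀ 1 with hT
  have hT1 : (1:ℝ) ≤ T := le_max_right _ _
  have hTpos : (0:ℝ) < T := lt_of_lt_of_le one_pos hT1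
  -- on Ioi T, (m/2) * t⁻¹ ≤ h t
  have hbound : ∀ t ∈ Ioi T, ‖m / 2 * t⁻¹‖ ≤ h t := by
    intro t ht
    have htpos : 0 < t := lt_trans hTpos ht
    have h1 : m / 2 < t * h t := hT₀ t (le_trans (le_max_left _ _) (le_of_lt ht))
    have : m / 2 * t⁻¹ < h t := by
      rw [mul_inv_lt_iff₀ htpos, mul_comm]
      exact h1
    rw [Real.norm_eq_abs, abs_of_nonneg (by positivity)]
    exact this.le
  have hint1 : IntegrableOn (fun t => m / 2 * t⁻¹) (Ioi T) := by
    refine Integrable.mono' (hint.integrableOn) ?_ ?_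
    · exact ((measurable_const.mul measurable_inv).aestronglyMeasurable)
    · rw [ae_restrict_iff' measurableSet_Ioi]
      filter_upwards with t ht
      exact hbound t ht
  have hint2 : IntegrableOn (fun t : ℝ => t⁻¹) (Ioi T) := by
    have h4 : IntegrableOn (fun t : ℝ => 2 / m * (m / 2 * t⁻¹)) (Ioi T) := hint1.const_mul (2 / m)
    refine (integrableOn_congr_fun ?_ measurableSet_Ioi).mp h4
    intro t ht
    have : m ≠ 0 := ne_of_gt hmpos
    field_simp
  have : ¬ IntegrableOn (fun t : ℝ => t⁻¹) (Ioi T) := by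
    have h3 : ¬ IntegrableOn (fun t : ℝ => t ^ (-1 : ℝ)) (Ioi T) := by
      rw [integrableOn_Ioi_rpow_iff hTpos]
      norm_num
    intro hcon
    refine h3 ((integrableOn_congr_fun ?_ measurableSet_Ioi).mp hcon)
    intro t ht
    show t⁻¹ = t ^ (-1 : ℝ)
    rw [Real.rpow_neg_one]
  exact this hint2

private lemma oneDim {h h' : ℝ → ℝ} (hderiv : ∀ t, HasDerivAt h (h' t) t) (hpos : ∀ t, 0 ≤ h t)
    (hint : Integrable h) (hint' : Integrable (fun t => t * h' t)) :
    (∫ t, t * h' t) = - ∫ t, h t := by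
  set H : ℝ → ℝ := fun t => t * h t with hHdef
  set H' : ℝ → ℝ := fun t => h t + t * h' t with hH'def
  have hH : ∀ t, HasDerivAt H (H' t) t := by
    intro t
    have := (hasDerivAt_id t).mul (hderiv t)
    simpa [H, H', one_mul, Pi.mul_def] using this
  have hH'int : Integrable H' := hint.add hint'
  -- limit at +∞
  have htop : Tendsto H atTop (nhds (limUnder atTop H)) :=
    tendsto_limUnder_of_hasDerivAt_of_integrableOn_Ioi (a := 0)
      (fun x _ => hH x) hH'int.integrableOn
  have hmtop : limUnder atTop H = 0 := aux_limit_zero hpos hint htop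
  rw [hmtop] at htop
  -- limit at -∞
  have hbot : Tendsto H atBot (nhds (limUnder atBot H)) :=
    tendsto_limUnder_of_hasDerivAt_of_integrableOn_Iic (a := 0)
      (fun x _ => hH x) hH'int.integrableOn
  have hmbot : limUnder atBot H = 0 := by
    have hneg : Tendsto (fun t => t * h (-t)) atTop (nhds (-(limUnder atBot H))) := by
      have h1 : Tendsto (fun t : ℝ => H (-t)) atTop (nhds (limUnder atBot H)) :=
        hbot.comp tendsto_neg_atTop_atBot
      have h2 := h1.neg
      refine h2.congr (fun t => ?_)
      simp [H]
    have := aux_limit_zero (h := fun t => h (-t)) (fun t => hpos (-t)) ?_ hneg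
    · linarith [this]
    · exact hint.comp_neg
  rw [hmbot] at hbot
  have h1 : (∫ t in Ioi (0:ℝ), H' t) = 0 - H 0 :=
    integral_Ioi_of_hasDerivAt_of_tendsto' (fun x _ => hH x) hH'int.integrableOn htop
  have h2 : (∫ t in Iic (0:ℝ), H' t) = H 0 - 0 :=
    integral_Iic_of_hasDerivAt_of_tendsto' (fun x _ => hH x) hH'int.integrableOn hbot
  have h3 : (∫ t, H' t) = 0 := by
    rw [← intervalIntegral.integral_Iic_add_Ioi (b := (0:ℝ)) hH'int.integrableOn hH'int.integrableOn, h1, h2]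
    ring
  have h4 : (∫ t, H' t) = (∫ t, h t) + ∫ t, t * h' t := integral_add hint hint'
  rw [h4] at h3
  linarith

private lemma coord_integral {n : ℕ} (g : EuclideanSpace ℝ (Fin (n+1)) → ℝ)
    (G : EuclideanSpace ℝ (Fin (n+1)) → EuclideanSpace ℝ (Fin (n+1)) →L[ℝ] ℝ)
    (hg : ∀ x, HasFDerivAt g (G x) x) (hpos : ∀ x, 0 ≤ g x)
    (hgint : Integrable g) (i : Fin (n+1))
    (hGint : Integrable (fun x => x i * G x (EuclideanSpace.single i 1))) :
    (∫ x, x i * G x (EuclideanSpace.single i 1)) = - ∫ x, g x := by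
  classical
  set v : EuclideanSpace ℝ (Fin (n+1)) := EuclideanSpace.single i 1 with hv
  set e : ℝ × (Fin n → ℝ) ≃ᵐ EuclideanSpace ℝ (Fin (n+1)) :=
    ((MeasurableEquiv.piFinSuccAbove (fun _ : Fin (n+1) => ℝ) i).symm).trans
      (MeasurableEquiv.toLp 2 (Fin (n+1) → ℝ)) with he
  have hem : MeasurePreserving e :=
    ((EuclideanSpace.volume_preserving_symm_measurableEquiv_toLp (Fin (n+1))).symm _).comp
      ((volume_preserving_piFinSuccAbove (fun _ : Fin (n+1) => ℝ) i).symm _)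
  have hco : ∀ (y : Fin n → ℝ) (t : ℝ), (e (t, y)) i = t := by
    intro y t
    show (i.insertNth t y : Fin (n+1) → ℝ) i = t
    simp
  have hline : ∀ (y : Fin n → ℝ), (fun t : ℝ => e (t, y)) = fun t => e (0, y) + t • v := by
    intro y
    refine funext fun t => PiLp.ext fun j => ?_
    show (i.insertNth t y : Fin (n+1) → ℝ) j
      = (i.insertNth (0:ℝ) y : Fin (n+1) → ℝ) j + t * (EuclideanSpace.single i (1:ℝ)) j
    rcases eq_or_ne j i with rfl | hne
    · simp
    · obtain ⟨k, rfl⟩ := Fin.exists_succAbove_eq hne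
      rw [Fin.insertNth_apply_succAbove, Fin.insertNth_apply_succAbove,
        EuclideanSpace.single_apply]
      simp [Fin.succAbove_ne i k]
  -- transfer to the product space
  set IG : ℝ × (Fin n → ℝ) → ℝ := fun z => (e z) i * G (e z) v with hIGdef
  set Ig : ℝ × (Fin n → ℝ) → ℝ := fun z => g (e z) with hIgdef
  have hIGint : Integrable IG :=
    (hem.integrable_comp_emb e.measurableEmbedding).mpr hGint
  have hIgint : Integrable Ig :=
    (hem.integrable_comp_emb e.measurableEmbedding).mpr hgint
  have hIGint' : Integrable IG ((volume : Measure ℝ).prod (volume : Measure (Fin n → ℝ))) := by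
    rwa [← Measure.volume_eq_prod]
  have hIgint' : Integrable Ig ((volume : Measure ℝ).prod (volume : Measure (Fin n → ℝ))) := by
    rwa [← Measure.volume_eq_prod]
  have haeG := hIGint'.prod_left_ae
  have haeg := hIgint'.prod_left_ae
  have hslice : ∀ᵐ y : Fin n → ℝ, (∫ t, IG (t, y)) = - ∫ t, Ig (t, y) := by
    filter_upwards [haeG, haeg] with y hyG hyg
    have hlinederiv : ∀ t : ℝ, HasDerivAt (fun t : ℝ => e (t, y)) v t := by
      intro t
      rw [hline y]
      simpa using ((hasDerivAt_id t).smul_const v).const_add (e (0, y))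
    have hderiv : ∀ t : ℝ, HasDerivAt (fun t => Ig (t, y)) (G (e (t, y)) v) t := by
      intro t
      exact (hg (e (t, y))).comp_hasDerivAt t (hlinederiv t)
    have hIGeq : (fun t => IG (t, y)) = fun t => t * G (e (t, y)) v := by
      funext t; rw [hIGdef]; simp only [hco]
    rw [hIGeq] at hyG ⊢
    exact oneDim hderiv (fun t => hpos _) hyg hyG
  have hmain : (∫ z, IG z) = - ∫ z, Ig z := by
    rw [Measure.volume_eq_prod, integral_prod_symm _ hIGint', integral_prod_symm _ hIgint',
      ← integral_neg]
    exact integral_congr_ae hslice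
  have h1 : (∫ x, x i * G x (EuclideanSpace.single i 1)) = ∫ z, IG z :=
    (hem.integral_comp e.measurableEmbedding _).symm
  have h2 : (∫ x, g x) = ∫ z, Ig z :=
    (hem.integral_comp e.measurableEmbedding _).symm
  rw [h1, h2, hmain]

private lemma abstract_opt {S A B : ℝ} (hS : 0 ≤ S) (hA : 0 ≤ A) (hB : 0 ≤ B)
    (h : ∀ t : ℝ, 0 < t → S ≤ t / 2 * A + 1 / (2 * t) * B) : S ^ 2 ≤ A * B := by
  rcases eq_or_lt_of_le hA with hA0 | hApos
  · have hS0 : S = 0 := by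
      refine le_antisymm ?_ hS
      by_contra hpos
      push_neg at hpos
      have ht := h (B / S + 1) (by positivity)
      rw [← hA0] at ht
      have : 1 / (2 * (B / S + 1)) * B < S := by
        rw [div_mul_eq_mul_div, one_mul, div_lt_iff₀ (by positivity)]
        have : B / S * S = B := div_mul_cancel₀ B (ne_of_gt hpos)
        nlinarith
      nlinarith
    rw [hS0]
    nlinarith
  · rcases eq_or_lt_of_le hB with hB0 | hBpos
    · have hS0 : S = 0 := by
        refine le_antisymm ?_ hS
        by_contra hpos
        push_neg at hpos
        have ht := h (S / A) (by positivity)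
        rw [← hB0] at ht
        have : S / A / 2 * A = S / 2 := by field_simp
        nlinarith
      rw [hS0]
      nlinarith
    · set sa := Real.sqrt A with hsa
      set sb := Real.sqrt B with hsb
      have hsa0 : 0 < sa := Real.sqrt_pos.mpr hApos
      have hsb0 : 0 < sb := Real.sqrt_pos.mpr hBpos
      have h1 : sa * sa = A := Real.mul_self_sqrt hApos.le
      have h2 : sb * sb = B := Real.mul_self_sqrt hBpos.le
      have ht := h (sb / sa) (by positivity)
      have hkey : S ≤ sa * sb := by
        have e1 : sb / sa / 2 * A + 1 / (2 * (sb / sa)) * B = sa * sb := by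
          field_simp
          nlinarith
        linarith [ht, e1.symm.le]
      nlinarith

end NonlinearHeisenbergAux

open Filter Set in

/-- A nonlinear extension of the Heisenberg uncertainty principle:
`(d/(p+1))² (∫ f^{p+1})² ≤ (∫ |∇f|²)(∫ |x|² f^{2p})` for nonnegative `f`. -/
theorem nonlinear_heisenberg (d : ℕ) (hd : 1 ≤ d) (p : ℝ) (hp : 1 < p)
    (f : EuclideanSpace ℝ (Fin d) → ℝ)
    (hf : Differentiable ℝ f) (hnonneg : ∀ x, 0 ≤ f x)
    (hgrad : Integrable (fun x => ‖gradient f x‖ ^ 2))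
    (hfp1 : Integrable (fun x => f x ^ (p + 1)))
    (hmom : Integrable (fun x => ‖x‖ ^ 2 * f x ^ (2 * p))) :
    ((d : ℝ) / (p + 1)) ^ 2 * (∫ x, f x ^ (p + 1)) ^ 2 ≤
      (∫ x, ‖gradient f x‖ ^ 2) * ∫ x, ‖x‖ ^ 2 * f x ^ (2 * p) := by
  obtain ⟨n, rfl⟩ : ∃ n, d = n + 1 := ⟨d - 1, (Nat.succ_pred_eq_of_pos hd).symm⟩
  have hp1 : (0:ℝ) < p + 1 := by linarith
  have hfp : ∀ x, (0:ℝ) ≤ f x ^ p := fun x => Real.rpow_nonneg (hnonneg x) p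
  set F : EuclideanSpace ℝ (Fin (n+1)) → (EuclideanSpace ℝ (Fin (n+1)) →L[ℝ] ℝ) :=
    fun x => ((p + 1) * f x ^ p) • fderiv ℝ f x with hF
  have hgderiv : ∀ x, HasFDerivAt (fun y => f y ^ (p + 1)) (F x) x := by
    intro x
    have h1 : HasDerivAt (fun t : ℝ => t ^ (p + 1)) ((p + 1) * f x ^ (p + 1 - 1)) (f x) :=
      Real.hasDerivAt_rpow_const (Or.inr (by linarith))
    have h2 := h1.comp_hasFDerivAt x (hf x).hasFDerivAt
    simpa [hF, add_sub_cancel_right, Function.comp_def] using h2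
  have hnormF : ∀ x, ‖fderiv ℝ f x‖ = ‖gradient f x‖ := by
    intro x
    rw [gradient]
    exact ((InnerProductSpace.toDual ℝ (EuclideanSpace ℝ (Fin (n+1)))).symm.norm_map
      (fderiv ℝ f x)).symm
  have hFnorm : ∀ x, ‖F x‖ = (p + 1) * f x ^ p * ‖gradient f x‖ := by
    intro x
    show ‖((p + 1) * f x ^ p) • fderiv ℝ f x‖ = _
    rw [norm_smul, Real.norm_eq_abs,
      abs_of_nonneg (mul_nonneg hp1.le (hfp x)), hnormF]
  -- pointwise algebraic facts
  have hsq : ∀ x, f x ^ p * f x ^ p = f x ^ (2 * p) := by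
    intro x
    rw [two_mul, Real.rpow_add' (hnonneg x) (by linarith)]
  have hkey : ∀ t : ℝ, 0 < t → ∀ x,
      (p + 1) * f x ^ p * (‖gradient f x‖ * ‖x‖) ≤
        (p + 1) * (t / 2 * ‖gradient f x‖ ^ 2 + 1 / (2 * t) * (‖x‖ ^ 2 * f x ^ (2 * p))) := by
    intro t ht x
    have h1 : f x ^ p * (‖gradient f x‖ * ‖x‖) ≤
        t / 2 * ‖gradient f x‖ ^ 2 + 1 / (2 * t) * (‖x‖ ^ 2 * f x ^ (2 * p)) := by
      have h2 : ‖x‖ ^ 2 * f x ^ (2 * p) = (‖x‖ * f x ^ p) ^ 2 := by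
        rw [← hsq x]; ring
      rw [h2]
      set a := ‖gradient f x‖ with hadef
      set b := ‖x‖ * f x ^ p with hbdef
      have h3 : 2 * t * (a * b) ≤ t ^ 2 * a ^ 2 + b ^ 2 := by
        nlinarith [sq_nonneg (t * a - b)]
      have h4 : a * b ≤ (t ^ 2 * a ^ 2 + b ^ 2) / (2 * t) := by
        rw [le_div_iff₀ (by positivity)]
        linarith
      have h5 : (t ^ 2 * a ^ 2 + b ^ 2) / (2 * t) = t / 2 * a ^ 2 + 1 / (2 * t) * b ^ 2 := by
        field_simp
      calc f x ^ p * (a * ‖x‖) = a * b := by rw [hbdef]; ring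
        _ ≤ _ := by rw [h5] at h4; exact h4
    calc (p + 1) * f x ^ p * (‖gradient f x‖ * ‖x‖)
        = (p + 1) * (f x ^ p * (‖gradient f x‖ * ‖x‖)) := by ring
      _ ≤ _ := by exact mul_le_mul_of_nonneg_left h1 hp1.le
  -- bounds on the integrands
  have hGi_bound : ∀ (i : Fin (n+1)) x,
      |x i * F x (EuclideanSpace.single i 1)| ≤
        (p + 1) * f x ^ p * (‖gradient f x‖ * ‖x‖) := by
    intro i x
    have h1 : |x i| ≤ ‖x‖ := by
      have := abs_real_inner_le_norm (EuclideanSpace.single i (1:ℝ)) x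
      simpa [EuclideanSpace.inner_single_left, EuclideanSpace.norm_single] using this
    have h2 : |F x (EuclideanSpace.single i 1)| ≤ ‖F x‖ := by
      have := (F x).le_opNorm (EuclideanSpace.single i 1)
      simpa [EuclideanSpace.norm_single] using this
    calc |x i * F x (EuclideanSpace.single i 1)|
        = |x i| * |F x (EuclideanSpace.single i 1)| := abs_mul _ _
      _ ≤ ‖x‖ * ‖F x‖ := by
          exact mul_le_mul h1 h2 (abs_nonneg _) (norm_nonneg _)
      _ = (p + 1) * f x ^ p * (‖gradient f x‖ * ‖x‖) := by
          rw [hFnorm x]; ring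
  have hFxx_bound : ∀ x, |F x x| ≤ (p + 1) * f x ^ p * (‖gradient f x‖ * ‖x‖) := by
    intro x
    have h2 : |F x x| ≤ ‖F x‖ * ‖x‖ := (F x).le_opNorm x
    calc |F x x| ≤ ‖F x‖ * ‖x‖ := h2
      _ = (p + 1) * f x ^ p * (‖gradient f x‖ * ‖x‖) := by rw [hFnorm x]; ring
  -- the dominating integrable function (t = 1)
  have hDint : Integrable (fun x : EuclideanSpace ℝ (Fin (n+1)) =>
      (p + 1) * ((1:ℝ) / 2 * ‖gradient f x‖ ^ 2 + 1 / (2 * 1) * (‖x‖ ^ 2 * f x ^ (2 * p)))) := by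
    exact ((hgrad.const_mul (1/2)).add (hmom.const_mul (1/(2*1)))).const_mul (p+1)
  have hdom : ∀ x, (p + 1) * f x ^ p * (‖gradient f x‖ * ‖x‖) ≤
      (p + 1) * ((1:ℝ) / 2 * ‖gradient f x‖ ^ 2 + 1 / (2 * 1) * (‖x‖ ^ 2 * f x ^ (2 * p))) :=
    hkey 1 one_pos
  -- measurability
  have hmf : Measurable f := hf.continuous.measurable
  have hcfp : Continuous fun x => f x ^ p := by
    refine continuous_iff_continuousAt.mpr fun x => ?_
    exact (Real.continuousAt_rpow_const (f x) p (Or.inr (by linarith))).comp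
      hf.continuous.continuousAt
  have hmfp : Measurable fun x => f x ^ p := hcfp.measurable
  have hmF : ∀ i : Fin (n+1),
      Measurable fun x => x i * F x (EuclideanSpace.single i 1) := by
    intro i
    have h1 : Measurable fun x : EuclideanSpace ℝ (Fin (n+1)) =>
        fderiv ℝ f x (EuclideanSpace.single i 1) :=
      measurable_fderiv_apply_const ℝ f _
    have h2 : Measurable fun x : EuclideanSpace ℝ (Fin (n+1)) => x i :=
      (EuclideanSpace.proj i).continuous.measurable
    have h3 : Measurable fun x => F x (EuclideanSpace.single i 1) := by
      have : (fun x => F x (EuclideanSpace.single i 1)) =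
          fun x => ((p + 1) * f x ^ p) * fderiv ℝ f x (EuclideanSpace.single i 1) := rfl
      rw [this]
      exact ((measurable_const.mul hmfp).mul h1)
    exact h2.mul h3
  have hmFxx : Measurable fun x => F x x := by
    have h1 : Measurable fun x : EuclideanSpace ℝ (Fin (n+1)) => fderiv ℝ f x x := by
      have hA : Measurable fun x : EuclideanSpace ℝ (Fin (n+1)) => (fderiv ℝ f x, x) :=
        (measurable_fderiv ℝ f).prodMk measurable_id
      have hB : Continuous fun q : (EuclideanSpace ℝ (Fin (n+1)) →L[ℝ] ℝ) ×
          EuclideanSpace ℝ (Fin (n+1)) => q.1 q.2 := isBoundedBilinearMap_apply.continuous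
      exact hB.measurable.comp hA
    have : (fun x => F x x) = fun x => ((p + 1) * f x ^ p) * fderiv ℝ f x x := rfl
    rw [this]
    exact (measurable_const.mul hmfp).mul h1
  -- integrability
  have hGi_int : ∀ i : Fin (n+1),
      Integrable (fun x => x i * F x (EuclideanSpace.single i 1)) := by
    intro i
    refine Integrable.mono' hDint (hmF i).aestronglyMeasurable ?_
    filter_upwards with x
    exact le_trans (by rw [Real.norm_eq_abs]; exact hGi_bound i x) (hdom x)
  have hFxx_int : Integrable (fun x => F x x) := by
    refine Integrable.mono' hDint hmFxx.aestronglyMeasurable ?_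
    filter_upwards with x
    exact le_trans (by rw [Real.norm_eq_abs]; exact hFxx_bound x) (hdom x)
  -- expansion in coordinates
  have hsum : ∀ x : EuclideanSpace ℝ (Fin (n+1)),
      F x x = ∑ i, x i * F x (EuclideanSpace.single i 1) := by
    intro x
    have hx : x = ∑ i, x i • EuclideanSpace.single i (1:ℝ) := by
      have := (EuclideanSpace.basisFun (Fin (n+1)) ℝ).sum_repr x
      simp only [EuclideanSpace.basisFun_repr, EuclideanSpace.basisFun_apply] at this
      exact this.symm
    calc F x x = F x (∑ i, x i • EuclideanSpace.single i (1:ℝ)) := by rw [← hx]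
      _ = ∑ i, x i * F x (EuclideanSpace.single i 1) := by
          rw [map_sum]
          exact Finset.sum_congr rfl fun i _ => by
            rw [ContinuousLinearMap.map_smul, smul_eq_mul]
  -- the integral identity
  have hident : (∫ x, F x x) = -((n:ℝ) + 1) * ∫ x, f x ^ (p + 1) := by
    have h1 : (∫ x, F x x) = ∑ i, ∫ x, x i * F x (EuclideanSpace.single i 1) := by
      calc (∫ x, F x x) = ∫ x, ∑ i, x i * F x (EuclideanSpace.single i 1) :=
            integral_congr_ae (Filter.Eventually.of_forall hsum)
        _ = ∑ i, ∫ x, x i * F x (EuclideanSpace.single i 1) :=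
            integral_finset_sum _ (fun i _ => hGi_int i)
    rw [h1]
    have h2 : ∀ i : Fin (n+1), (∫ x, x i * F x (EuclideanSpace.single i 1)) =
        - ∫ x, f x ^ (p + 1) := by
      intro i
      exact coord_integral (fun x => f x ^ (p + 1)) F hgderiv
        (fun x => Real.rpow_nonneg (hnonneg x) _) hfp1 i (hGi_int i)
    rw [Finset.sum_congr rfl (fun i _ => h2 i), Finset.sum_const]
    simp
    ring
  -- final optimization step
  set A := ∫ x, ‖gradient f x‖ ^ 2 with hAdef
  set B := ∫ x, ‖x‖ ^ 2 * f x ^ (2 * p) with hBdef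
  set I := ∫ x, f x ^ (p + 1) with hIdef
  have hI : 0 ≤ I := integral_nonneg fun x => Real.rpow_nonneg (hnonneg x) _
  have hA : 0 ≤ A := integral_nonneg fun x => sq_nonneg _
  have hB : 0 ≤ B := integral_nonneg fun x =>
    mul_nonneg (sq_nonneg _) (Real.rpow_nonneg (hnonneg x) _)
  have key2 : ∀ t : ℝ, 0 < t →
      ((n:ℝ) + 1) * I ≤ (p + 1) * (t / 2 * A + 1 / (2 * t) * B) := by
    intro t ht
    have h1 : ((n:ℝ) + 1) * I = - ∫ x, F x x := by rw [hident]; ring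
    have h2 : - (∫ x, F x x) ≤ ∫ x, |F x x| := by
      refine le_trans (neg_le_abs _) ?_
      calc |∫ x, F x x| = ‖∫ x, F x x‖ := (Real.norm_eq_abs _).symm
        _ ≤ ∫ x, ‖F x x‖ := norm_integral_le_integral_norm _
        _ = ∫ x, |F x x| := by simp [Real.norm_eq_abs]
    have h3 : (∫ x, |F x x|) ≤
        ∫ x, (p + 1) * (t / 2 * ‖gradient f x‖ ^ 2 + 1 / (2 * t) * (‖x‖ ^ 2 * f x ^ (2 * p))) := by
      refine integral_mono hFxx_int.abs
        (((hgrad.const_mul (t/2)).add (hmom.const_mul (1/(2*t)))).const_mul (p+1)) ?_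
      intro x
      exact le_trans (hFxx_bound x) (hkey t ht x)
    have h4 : (∫ x, (p + 1) * (t / 2 * ‖gradient f x‖ ^ 2
        + 1 / (2 * t) * (‖x‖ ^ 2 * f x ^ (2 * p))))
        = (p + 1) * (t / 2 * A + 1 / (2 * t) * B) := by
      rw [integral_const_mul]
      congr 1
      rw [integral_add (hgrad.const_mul _) (hmom.const_mul _),
        integral_const_mul, integral_const_mul]
    rw [h1]
    rw [h4] at h3
    linarith
  have hs : (((n:ℝ) + 1) / (p + 1) * I) ^ 2 ≤ A * B := by
    refine abstract_opt (by positivity) hA hB ?_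
    intro t ht
    have h5 := key2 t ht
    rw [div_mul_eq_mul_div, div_le_iff₀ hp1]
    linarith
  have hcast : (((n + 1 : ℕ) : ℝ) / (p + 1)) ^ 2 * I ^ 2 = (((n:ℝ) + 1) / (p + 1) * I) ^ 2 := by
    push_cast
    ring
  rw [hcast]
  exact hs
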